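/- Every connected component of the solution graph of a Horn formula contains a unique locally minimal solution, and this solution is the coordinate-wise minimum of the component. -/

import Mathlib

def SatClause {n : ℕ} (a : Fin n → Bool) (c : List (Fin n × Bool)) : Prop :=
  ∃ l ∈ c, (if l.2 then a l.1 else !(a l.1)) = true

def IsHornClause {n : ℕ} (c : List (Fin n × Bool)) : Prop :=
  (c.filter (fun l => l.2)).length ≤ 1

def Reach {ι : Type*} [Fintype ι] (S : Set (ι → Bool)) : (ι → Bool) → (ι → Bool) → Prop :=
  Relation.ReflTransGen (fun u v => u ∈ S ∧ v ∈ S ∧ hammingDist u v = 1)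

/-- `a` is locally minimal in `S`: flipping any 1-coordinate to 0 leaves `S`. -/
def LocallyMinimal {n : ℕ} (S : Set (Fin n → Bool)) (a : Fin n → Bool) : Prop :=
  ∀ i : Fin n, a i = true → Function.update a i false ∉ S

section Aux

variable {n : ℕ}

/-- coordinatewise conjunction -/
def bmeet (u v : Fin n → Bool) : Fin n → Bool := fun i => u i && v i

lemma bmeet_self (u : Fin n → Bool) : bmeet u u = u := by
  funext i; simp [bmeet]

lemma bmeet_comm (u v : Fin n → Bool) : bmeet u v = bmeet v u := by
  funext i; simp [bmeet, Bool.and_comm]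

lemma bmeet_le_left (u v : Fin n → Bool) : bmeet u v ≤ u := by
  intro i; simp [bmeet]; cases u i <;> simp

lemma bmeet_le_right (u v : Fin n → Bool) : bmeet u v ≤ v := by
  intro i; simp [bmeet]; cases v i <;> simp [Bool.and_false]

lemma satclause_meet {a b : Fin n → Bool} {c : List (Fin n × Bool)}
    (hc : IsHornClause c) (ha : SatClause a c) (hb : SatClause b c) :
    SatClause (bmeet a b) c := by
  obtain ⟨l1, hl1, h1⟩ := ha
  obtain ⟨l2, hl2, h2⟩ := hb
  by_cases e1 : l1.2
  · by_cases e2 : l2.2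
    · -- both positive; Horn forces the same variable
      have m1 : l1 ∈ c.filter (fun l => l.2) := List.mem_filter.2 ⟨hl1, by simp [e1]⟩
      have m2 : l2 ∈ c.filter (fun l => l.2) := List.mem_filter.2 ⟨hl2, by simp [e2]⟩
      have hl12 : l1 = l2 := by
        unfold IsHornClause at hc
        rcases hfl : c.filter (fun l => l.2) with _ | ⟨x, t⟩
        · rw [hfl] at m1; simp at m1
        · rw [hfl] at hc m1 m2
          rcases t with _ | ⟨y, t'⟩
          · simp at m1 m2; rw [m1, m2]
          · simp at hc
      simp only [e1, if_pos] at h1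
      rw [hl12] at h1
      simp only [e2, if_pos] at h2
      exact ⟨l2, hl2, by simp [e2, bmeet, h1, h2]⟩
    · simp only [Bool.not_eq_true] at e2
      simp [e2] at h2
      refine ⟨l2, hl2, ?_⟩
      simp [e2, bmeet, h2]
  · simp only [Bool.not_eq_true] at e1
    simp [e1] at h1
    refine ⟨l1, hl1, ?_⟩
    simp [e1, bmeet, h1]

lemma hammingDist_bmeet_le (u v w : Fin n → Bool) :
    hammingDist (bmeet u v) (bmeet u w) ≤ hammingDist v w := by
  unfold hammingDist
  apply Finset.card_le_card
  intro i hi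
  simp only [Finset.mem_filter, Finset.mem_univ, true_and] at hi ⊢
  intro h
  exact hi (by simp [bmeet, h])

lemma reach_symm {S : Set (Fin n → Bool)} {x y : Fin n → Bool}
    (h : Reach S x y) : Reach S y x := by
  refine @Std.Symm.symm _ _ (@Relation.ReflTransGen.symmetric _ _ ⟨?_⟩) _ _ h
  intro u v ⟨h1, h2, h3⟩
  exact ⟨h2, h1, by rw [hammingDist_comm]; exact h3⟩

lemma mem_of_reach {S : Set (Fin n → Bool)} {x y : Fin n → Bool}
    (hx : x ∈ S) (h : Reach S x y) : y ∈ S := by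
  induction h with
  | refl => exact hx
  | tail _ e _ => exact e.2.1

lemma reach_of_dist_le_one {S : Set (Fin n → Bool)} {x y : Fin n → Bool}
    (hx : x ∈ S) (hy : y ∈ S) (h : hammingDist x y ≤ 1) : Reach S x y := by
  rcases Nat.le_one_iff_eq_zero_or_eq_one.1 h with h0 | h1
  · rw [hammingDist_eq_zero.1 h0]; exact Relation.ReflTransGen.refl
  · exact Relation.ReflTransGen.single ⟨hx, hy, h1⟩

lemma reach_meet {S : Set (Fin n → Bool)}
    (hS : ∀ x ∈ S, ∀ y ∈ S, bmeet x y ∈ S)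
    {u v : Fin n → Bool} (hu : u ∈ S) (h : Reach S u v) :
    Reach S u (bmeet u v) := by
  induction h with
  | refl => rw [bmeet_self]; exact Relation.ReflTransGen.refl
  | @tail v w _ e ih =>
    have hv : v ∈ S := e.1
    have hw : w ∈ S := e.2.1
    have hp : bmeet u v ∈ S := hS u hu v hv
    have hq : bmeet u w ∈ S := hS u hu w hw
    have hd : hammingDist (bmeet u v) (bmeet u w) ≤ 1 := by
      calc hammingDist (bmeet u v) (bmeet u w) ≤ hammingDist v w := hammingDist_bmeet_le u v w
        _ = 1 := e.2.2
    exact ih.trans (reach_of_dist_le_one hp hq hd)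

lemma hammingDist_update {x : Fin n → Bool} {i : Fin n} {b : Bool} (h : x i ≠ b) :
    hammingDist x (Function.update x i b) = 1 := by
  unfold hammingDist
  rw [show ({j | x j ≠ Function.update x i b j} : Finset (Fin n)) = {i} from ?_]
  · simp
  · ext j
    simp only [Finset.mem_filter, Finset.mem_univ, true_and, Finset.mem_singleton]
    by_cases hj : j = i
    · subst hj; simp [Function.update_self, h]
    · simp [Function.update_of_ne hj, hj]

lemma eq_update_of_dist_one {x y : Fin n → Bool} (hle : y ≤ x)
    (hd : hammingDist x y = 1) :
    ∃ i, x i = true ∧ y = Function.update x i false := by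
  unfold hammingDist at hd
  obtain ⟨i, hi⟩ := Finset.card_eq_one.1 hd
  have hmem : ∀ j, x j ≠ y j ↔ j = i := by
    intro j
    rw [← Finset.mem_singleton, ← hi]
    simp
  have hxi : x i ≠ y i := (hmem i).2 rfl
  have hyi : y i ≤ x i := hle i
  have hkey : x i = true ∧ y i = false := by
    revert hxi hyi
    cases hx' : x i <;> cases hy' : y i <;> simp
  refine ⟨i, hkey.1, funext fun j => ?_⟩
  by_cases hj : j = i
  · subst hj; rw [Function.update_self, hkey.2]
  · rw [Function.update_of_ne hj]
    by_contra h
    exact hj ((hmem j).1 fun h' => h h'.symm)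

lemma locmin_reach_eq {S : Set (Fin n → Bool)}
    (hS : ∀ x ∈ S, ∀ y ∈ S, bmeet x y ∈ S)
    {m' v : Fin n → Bool} (hm' : m' ∈ S) (hlm : LocallyMinimal S m')
    (h : Reach S m' v) : bmeet m' v = m' := by
  induction h with
  | refl => exact bmeet_self m'
  | @tail v w _ e ih =>
    by_contra hne
    have hq : bmeet m' w ∈ S := hS m' hm' w e.2.1
    have hd : hammingDist m' (bmeet m' w) ≤ 1 := by
      calc hammingDist m' (bmeet m' w) = hammingDist (bmeet m' v) (bmeet m' w) := by rw [ih]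
        _ ≤ hammingDist v w := hammingDist_bmeet_le m' v w
        _ = 1 := e.2.2
    have hd1 : hammingDist m' (bmeet m' w) = 1 := by
      rcases Nat.le_one_iff_eq_zero_or_eq_one.1 hd with h0 | h1
      · exact absurd (hammingDist_eq_zero.1 h0).symm hne
      · exact h1
    obtain ⟨i, hit, heq⟩ := eq_update_of_dist_one (bmeet_le_left m' w) hd1
    exact hlm i hit (heq ▸ hq)

lemma foldr_reach {S : Set (Fin n → Bool)}
    (hS : ∀ x ∈ S, ∀ y ∈ S, bmeet x y ∈ S)
    {a : Fin n → Bool} (ha : a ∈ S)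
    (L : List (Fin n → Bool)) (hL : ∀ x ∈ L, Reach S a x) :
    Reach S a (L.foldr bmeet a) := by
  induction L with
  | nil => exact Relation.ReflTransGen.refl
  | cons x L ih =>
    have hz : Reach S a (L.foldr bmeet a) := ih (fun y hy => hL y (List.mem_cons_of_mem x hy))
    have hx : Reach S a x := hL x (List.mem_cons_self)
    have hzS : L.foldr bmeet a ∈ S := mem_of_reach ha hz
    have hzx : Reach S (L.foldr bmeet a) x := (reach_symm hz).trans hx
    have : Reach S (L.foldr bmeet a) (bmeet (L.foldr bmeet a) x) := reach_meet hS hzS hzx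
    rw [bmeet_comm] at this
    exact hz.trans this

lemma foldr_le_mem {a x : Fin n → Bool} {L : List (Fin n → Bool)} (hx : x ∈ L) :
    L.foldr bmeet a ≤ x := by
  induction L with
  | nil => simp at hx
  | cons y L ih =>
    rcases List.mem_cons.1 hx with h | h
    · subst h; exact bmeet_le_left _ _
    · exact le_trans (bmeet_le_right _ _) (ih h)

end Aux

theorem horn_component_unique_locally_minimal (n : ℕ)
    (φ : List (List (Fin n × Bool)))
    (hHorn : ∀ c ∈ φ, IsHornClause c)
    (a : Fin n → Bool) (ha : a ∈ {x | ∀ c ∈ φ, SatClause x c}) :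
    let S : Set (Fin n → Bool) := {x | ∀ c ∈ φ, SatClause x c}
    ∃ m ∈ S, Reach S a m ∧ LocallyMinimal S m ∧
      (∀ b ∈ S, Reach S a b → m ≤ b) ∧
      (∀ m' ∈ S, Reach S a m' → LocallyMinimal S m' → m' = m) := by
  intro S
  classical
  have hS : ∀ x ∈ S, ∀ y ∈ S, bmeet x y ∈ S := by
    intro x hx y hy c hc
    exact satclause_meet (hHorn c hc) (hx c hc) (hy c hc)
  set L : List (Fin n → Bool) :=
    (Finset.univ.filter fun x => Reach S a x).toList with hLdef
  have hLmem : ∀ x ∈ L, Reach S a x := by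
    intro x hx
    rw [hLdef, Finset.mem_toList, Finset.mem_filter] at hx
    exact hx.2
  have hmemL : ∀ x, Reach S a x → x ∈ L := by
    intro x hx
    rw [hLdef, Finset.mem_toList, Finset.mem_filter]
    exact ⟨Finset.mem_univ x, hx⟩
  set m : Fin n → Bool := L.foldr bmeet a with hmdef
  have hram : Reach S a m := foldr_reach hS ha L hLmem
  have hmS : m ∈ S := mem_of_reach ha hram
  have hmin : ∀ b ∈ S, Reach S a b → m ≤ b := by
    intro b _ hb
    exact foldr_le_mem (hmemL b hb)
  have hlm : LocallyMinimal S m := by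
    intro i hmi hupd
    have hd : hammingDist m (Function.update m i false) = 1 :=
      hammingDist_update (by rw [hmi]; simp)
    have hreach : Reach S a (Function.update m i false) :=
      hram.tail ⟨hmS, hupd, hd⟩
    have := hmin _ hupd hreach i
    rw [hmi, Function.update_self] at this
    exact absurd this (by simp)
  refine ⟨m, hmS, hram, hlm, hmin, ?_⟩
  intro m' hm'S hm'r hm'lm
  have hreach : Reach S m' m := (reach_symm hm'r).trans hram
  have hmeet : bmeet m' m = m' := locmin_reach_eq hS hm'S hm'lm hreach
  have h1 : m' ≤ m := by rw [← hmeet]; exact bmeet_le_right m' m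
  exact le_antisymm h1 (hmin m' hm'S hm'r)
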